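/- Let X be a topological space, L a clopen subset of X, and R : X → X a continuous retraction (R ∘ R = R) with R[L] ⊆ L. Then the restriction R|_L : L → R[L] is semi-open whenever R : X → R[X] is semi-open. -/

import Mathlib

/-- If `L` is clopen in `X`, `R : X → X` is a continuous retraction with `R[L] ⊆ L`,
and `R : X → R[X]` is semi-open (images of nonempty open sets have nonempty interior
relative to `R[X]`), then the restriction `R|_L : L → R[L]` is semi-open: the image of
every nonempty relatively open subset of `L` has nonempty interior relative to `R[L]`. -/
theorem stmt_8 {X : Type*} [TopologicalSpace X] (L : Set X) (hL : IsClopen L)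
    (R : X → X) (hRc : Continuous R) (hRR : ∀ x, R (R x) = R x) (hRL : R '' L ⊆ L)
    (hsemi : ∀ U : Set X, IsOpen U → U.Nonempty →
      ∃ V : Set X, IsOpen V ∧ (V ∩ Set.range R).Nonempty ∧ V ∩ Set.range R ⊆ R '' U) :
    ∀ U : Set X, IsOpen U → (U ∩ L).Nonempty →
      ∃ V : Set X, IsOpen V ∧ (V ∩ (R '' L)).Nonempty ∧ V ∩ (R '' L) ⊆ R '' (U ∩ L) := by
  intro U hU hUL
  obtain ⟨V, hV, ⟨x, hxV, hxr⟩, hVsub⟩ := hsemi (U ∩ L) (hU.inter hL.isOpen) hUL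
  refine ⟨V ∩ L, hV.inter hL.isOpen, ?_, ?_⟩
  · have hx : x ∈ R '' (U ∩ L) := hVsub ⟨hxV, hxr⟩
    have hxRL : x ∈ R '' L := Set.image_mono (f := R) Set.inter_subset_right hx
    exact ⟨x, ⟨hxV, hRL hxRL⟩, hxRL⟩
  · rintro y ⟨⟨hyV, -⟩, hyRL⟩
    exact hVsub ⟨hyV, hyRL.imp fun a ha => ha.2⟩
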